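/- Let H be a complex Hilbert space, let C : H → H be a compact linear operator, and let b(u,v) := ⟨u,v⟩ + ⟨C u, v⟩, where ⟨·,·⟩ is the inner product of H; assume b is well-posed, i.e., (b(φ,ψ) = 0 for all ψ ∈ H) implies φ = 0. Let (X_ℓ)_{ℓ∈ℕ} be a nested sequence of finite-dimensional subspaces with dist(ψ, X_ℓ) → 0 for every ψ ∈ H, let f be a bounded conjugate-linear functional on H, and let φ ∈ H be the unique solution of b(φ,ψ) = f(ψ) for all ψ ∈ H. Then for every ε > 0 there exists ℓ₀ ∈ ℕ such that for all ℓ ≥ ℓ₀ the Galerkin solution Φ_ℓ ∈ X_ℓ exists, is unique, and satisfies ‖φ − Φ_ℓ‖ ≤ (1 + ε) · inf over Ψ ∈ X_ℓ of ‖φ − Ψ‖; i.e., the quasi-optimality constants C_ℓ can be chosen with C_ℓ → 1. -/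

import Mathlib

open scoped InnerProductSpace ComplexConjugate
open Filter Metric

private lemma stmt4_norm_sub_proj_le_infDist {H : Type*} [NormedAddCommGroup H]
    [InnerProductSpace ℂ H] (K : Submodule ℂ H) [K.HasOrthogonalProjection] (y : H) :
    ‖y - (Submodule.orthogonalProjection K y : H)‖ ≤ Metric.infDist y (K : Set H) := by
  rw [Metric.infDist_eq_iInf]
  haveI : Nonempty (K : Set H) := ⟨⟨0, K.zero_mem⟩⟩
  refine le_ciInf fun w => ?_
  rw [show ‖y - (Submodule.orthogonalProjection K y : H)‖ = ⨅ x : K, ‖y - x‖ from Submodule.starProjection_minimal y]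
  refine ciInf_le_of_le ⟨0, ?_⟩ (⟨(w : H), w.2⟩ : K) ?_
  · rintro r ⟨v, rfl⟩; positivity
  · rw [dist_eq_norm]


private lemma stmt4_bddBelow {H : Type*} [NormedAddCommGroup H]
    [InnerProductSpace ℂ H] [CompleteSpace H]
    (C : H →L[ℂ] H) (hC : IsCompactOperator C)
    (hinj : ∀ x : H, x + C x = 0 → x = 0) :
    ∃ c : ℝ, 0 < c ∧ ∀ x : H, c * ‖x‖ ≤ ‖x + C x‖ := by
  by_contra h
  push_neg at h
  have hn : ∀ n : ℕ, ∃ x : H, ‖x + C x‖ < (1 / (n + 1)) * ‖x‖ := by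
    intro n
    obtain ⟨x, hx⟩ := h (1 / (n + 1)) (by positivity)
    exact ⟨x, hx⟩
  choose x hx using hn
  have hxne : ∀ n, x n ≠ 0 := by
    intro n hn0
    have := hx n
    rw [hn0] at this
    simp at this
  set u : ℕ → H := fun n => (‖x n‖⁻¹ : ℂ) • x n with hu
  have hun : ∀ n, ‖u n‖ = 1 := by
    intro n
    have : ‖x n‖ ≠ 0 := norm_ne_zero_iff.mpr (hxne n)
    simp [hu, norm_smul, inv_mul_cancel₀ this]
  have hTu : ∀ n, ‖u n + C (u n)‖ < 1 / (n + 1) := by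
    intro n
    have hpos : (0 : ℝ) < ‖x n‖ := norm_pos_iff.mpr (hxne n)
    have : u n + C (u n) = (‖x n‖⁻¹ : ℂ) • (x n + C (x n)) := by
      simp [hu, smul_add, map_smul]
    rw [this, norm_smul]
    have h2 : ‖((‖x n‖ : ℂ))⁻¹‖ = ‖x n‖⁻¹ := by
      rw [norm_inv]
      simp
    rw [h2]
    calc ‖x n‖⁻¹ * ‖x n + C (x n)‖ < ‖x n‖⁻¹ * ((1 / (n + 1)) * ‖x n‖) := by
          exact mul_lt_mul_of_pos_left (hx n) (inv_pos.mpr hpos)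
      _ = 1 / (n + 1) := by field_simp
  have hT0 : Tendsto (fun n => u n + C (u n)) atTop (nhds 0) := by
    apply squeeze_zero_norm (fun n => le_of_lt (hTu n))
    exact tendsto_one_div_add_atTop_nhds_zero_nat
  have hKc : IsCompact (closure (C '' Metric.closedBall 0 1)) :=
    hC.isCompact_closure_image_closedBall 1
  have hmem : ∀ n, C (u n) ∈ closure (C '' Metric.closedBall 0 1) := by
    intro n
    exact subset_closure ⟨u n, by simp [hun n], rfl⟩
  obtain ⟨y, -, σ, hσ, hconv⟩ := hKc.tendsto_subseq hmem
  have huσ : Tendsto (fun n => u (σ n)) atTop (nhds (-y)) := by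
    have : (fun n => u (σ n)) = fun n => (u (σ n) + C (u (σ n))) - C (u (σ n)) := by
      funext n; abel
    rw [this]
    have := (hT0.comp hσ.tendsto_atTop).sub hconv
    simpa using this
  have hny : ‖-y‖ = 1 := by
    have h1 : Tendsto (fun n => ‖u (σ n)‖) atTop (nhds ‖-y‖) := huσ.norm
    have h2 : Tendsto (fun n => ‖u (σ n)‖) atTop (nhds 1) := by
      simp only [hun]; exact tendsto_const_nhds
    exact tendsto_nhds_unique h1 h2
  have hy0 : -y + C (-y) = 0 := by
    have h1 : Tendsto (fun n => u (σ n) + C (u (σ n))) atTop (nhds (-y + C (-y))) :=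
      huσ.add ((C.continuous.tendsto _).comp huσ)
    have h2 : Tendsto (fun n => u (σ n) + C (u (σ n))) atTop (nhds 0) :=
      hT0.comp hσ.tendsto_atTop
    exact tendsto_nhds_unique h1 h2
  have := hinj _ hy0
  rw [this] at hny
  simp at hny

private lemma stmt4_unif_small {H : Type*} [NormedAddCommGroup H]
    [InnerProductSpace ℂ H] [CompleteSpace H]
    (C : H →L[ℂ] H) (hC : IsCompactOperator C)
    (X : ℕ → Submodule ℂ H)
    (hdense : ∀ ψ : H,
      Tendsto (fun ℓ => Metric.infDist ψ (X ℓ : Set H)) atTop (nhds 0))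
    {γ : ℝ} (hγ : 0 < γ) :
    ∀ᶠ ℓ in atTop, ∀ x : H, ‖x‖ ≤ 1 → Metric.infDist (C x) (X ℓ : Set H) ≤ γ := by
  have hKc : IsCompact (closure (C '' Metric.closedBall 0 1)) :=
    hC.isCompact_closure_image_closedBall 1
  obtain ⟨t, -, htf, hcover⟩ := hKc.finite_cover_balls (show (0:ℝ) < γ/3 by positivity)
  have hev : ∀ᶠ ℓ in atTop, ∀ y ∈ t, Metric.infDist y (X ℓ : Set H) ≤ γ/3 := by
    rw [Filter.eventually_all_finite htf]
    intro y _
    exact (hdense y).eventually (eventually_le_nhds (by positivity))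
  filter_upwards [hev] with ℓ hℓ x hx
  have hmem : C x ∈ closure (C '' Metric.closedBall 0 1) :=
    subset_closure ⟨x, by simpa using hx, rfl⟩
  obtain ⟨y, hyt, hy⟩ := Set.mem_iUnion₂.mp (hcover hmem)
  calc Metric.infDist (C x) (X ℓ : Set H)
      ≤ Metric.infDist y (X ℓ : Set H) + dist (C x) y := Metric.infDist_le_infDist_add_dist
    _ ≤ γ/3 + γ/3 := add_le_add (hℓ y hyt) (le_of_lt hy)
    _ ≤ γ := by linarith

private lemma stmt4_compact_weak_null {H : Type*} [NormedAddCommGroup H]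
    [InnerProductSpace ℂ H] [CompleteSpace H]
    (C : H →L[ℂ] H) (hC : IsCompactOperator C)
    (u : ℕ → H) (hu : ∀ n, ‖u n‖ ≤ 1)
    (hw : ∀ v : H, Tendsto (fun n => ⟪v, u n⟫_ℂ) atTop (nhds 0)) :
    Tendsto (fun n => ‖C (u n)‖) atTop (nhds 0) := by
  have hmain : Tendsto (fun n => C (u n)) atTop (nhds 0) := by
    apply tendsto_of_subseq_tendsto
    intro ns hns
    have hKc : IsCompact (closure (C '' Metric.closedBall 0 1)) :=
      hC.isCompact_closure_image_closedBall 1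
    have hmem : ∀ k, C (u (ns k)) ∈ closure (C '' Metric.closedBall 0 1) := fun k =>
      subset_closure ⟨u (ns k), by simpa using hu (ns k), rfl⟩
    obtain ⟨y, -, ms, hms, hconv⟩ := hKc.tendsto_subseq hmem
    have hy0 : y = 0 := by
      have hinner : ∀ v : H, ⟪v, y⟫_ℂ = 0 := by
        intro v
        have h1 : Tendsto (fun k => ⟪v, C (u (ns (ms k)))⟫_ℂ) atTop (nhds ⟪v, y⟫_ℂ) :=
          (continuous_const.inner continuous_id).continuousAt.tendsto.comp hconv
        have h2 : Tendsto (fun k => ⟪v, C (u (ns (ms k)))⟫_ℂ) atTop (nhds 0) := by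
          have heq : (fun k => ⟪v, C (u (ns (ms k)))⟫_ℂ)
              = fun k => ⟪(ContinuousLinearMap.adjoint C) v, u (ns (ms k))⟫_ℂ := by
            funext k
            rw [ContinuousLinearMap.adjoint_inner_left]
          rw [heq]
          exact (hw _).comp (hns.comp hms.tendsto_atTop)
        exact tendsto_nhds_unique h1 h2
      have := hinner y
      rwa [inner_self_eq_zero] at this
    exact ⟨ms, by rw [← hy0]; exact hconv⟩
  simpa using hmain.norm


set_option maxHeartbeats 2000000 in

/-- Asymptotic Céa lemma with constants tending to 1:
for `b(u,v) = ⟨u,v⟩ + ⟨C u, v⟩` with compact `C` (forms linear in the first and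
conjugate-linear in the second argument, so `⟨u,v⟩ = ⟪v,u⟫_ℂ` in Mathlib's
convention), a nested asymptotically dense sequence of finite-dimensional
subspaces, and the continuous solution `φ`: for every `ε > 0` the Galerkin
solutions exist, are unique, and are `(1+ε)`-quasi-optimal for all large `ℓ`. -/
theorem statement4
    {H : Type*} [NormedAddCommGroup H] [InnerProductSpace ℂ H] [CompleteSpace H]
    (C : H →L[ℂ] H) (hC : IsCompactOperator C)
    (b : H → H → ℂ) (hb : ∀ u v : H, b u v = ⟪v, u⟫_ℂ + ⟪v, C u⟫_ℂ)
    (hwp : ∀ φ : H, (∀ ψ : H, b φ ψ = 0) → φ = 0)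
    (X : ℕ → Submodule ℂ H) (hXfin : ∀ ℓ, FiniteDimensional ℂ (X ℓ))
    (hXnest : ∀ ℓ, X ℓ ≤ X (ℓ + 1))
    (hdense : ∀ ψ : H,
      Filter.Tendsto (fun ℓ => Metric.infDist ψ (X ℓ : Set H)) Filter.atTop (nhds 0))
    (f : H → ℂ)
    (hf_add : ∀ x y : H, f (x + y) = f x + f y)
    (hf_smul : ∀ (c : ℂ) (x : H), f (c • x) = conj c * f x)
    (hf_bdd : ∃ Cf : ℝ, ∀ x : H, ‖f x‖ ≤ Cf * ‖x‖)
    (φ : H) (hφ : ∀ ψ : H, b φ ψ = f ψ) :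
    ∀ ε : ℝ, 0 < ε → ∃ ℓ₀ : ℕ, ∀ ℓ : ℕ, ℓ₀ ≤ ℓ →
      (∃! Φ : H, Φ ∈ X ℓ ∧ ∀ Ψ ∈ X ℓ, b Φ Ψ = f Ψ) ∧
      (∀ Φ : H, Φ ∈ X ℓ → (∀ Ψ ∈ X ℓ, b Φ Ψ = f Ψ) →
        ‖φ - Φ‖ ≤ (1 + ε) * Metric.infDist φ (X ℓ : Set H)) := by
  classical
  haveI hcomp : ∀ ℓ, CompleteSpace (X ℓ) := fun ℓ =>
    letI := hXfin ℓ; FiniteDimensional.complete ℂ _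
  intro ε hε
  -- injectivity of `1 + C`
  have hinj : ∀ x : H, x + C x = 0 → x = 0 := by
    intro x hx
    refine hwp x fun ψ => ?_
    rw [hb, ← inner_add_right, hx, inner_zero_right]
  obtain ⟨c, hc, hlow⟩ := stmt4_bddBelow C hC hinj
  set γ : ℝ := min (c/2) (ε*c/2) with hγdef
  have hγpos : 0 < γ := lt_min (by positivity) (by positivity)
  have hγc : γ ≤ c/2 := min_le_left _ _
  have hγε : γ ≤ ε*c/2 := min_le_right _ _
  have hcγ : 0 < c - γ := by linarith
  -- uniform smallness of `(1 - Pℓ) ∘ C`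
  have h1 := stmt4_unif_small C hC X hdense hγpos
  -- the normalized residuals
  set d : ℕ → H := fun ℓ => φ - (Submodule.orthogonalProjection (X ℓ) φ : H) with hd
  set u : ℕ → H := fun ℓ => if d ℓ = 0 then 0 else ((‖d ℓ‖ : ℂ))⁻¹ • d ℓ with hu
  have hu1 : ∀ ℓ, ‖u ℓ‖ ≤ 1 := by
    intro ℓ
    by_cases h : d ℓ = 0
    · simp [hu, h]
    · have hpos : (0:ℝ) < ‖d ℓ‖ := norm_pos_iff.mpr h
      simp only [hu, if_neg h, norm_smul, norm_inv]
      simp [abs_of_nonneg (norm_nonneg (d ℓ)), inv_mul_cancel₀ (ne_of_gt hpos)]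
  have hdu : ∀ ℓ, d ℓ = (‖d ℓ‖ : ℂ) • u ℓ := by
    intro ℓ
    by_cases h : d ℓ = 0
    · simp [hu, h]
    · have hpos : (0:ℝ) < ‖d ℓ‖ := norm_pos_iff.mpr h
      simp only [hu, if_neg h, smul_smul]
      rw [mul_inv_cancel₀ (by exact_mod_cast ne_of_gt hpos), one_smul]
  have humem : ∀ ℓ, u ℓ ∈ (X ℓ)ᗮ := by
    intro ℓ
    by_cases h : d ℓ = 0
    · simp [hu, h]
    · simp only [hu, if_neg h]
      exact Submodule.smul_mem _ _ (Submodule.sub_starProjection_mem_orthogonal (K := X ℓ) φ)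
  have hweak : ∀ v : H, Tendsto (fun ℓ => ⟪v, u ℓ⟫_ℂ) atTop (nhds 0) := by
    intro v
    apply squeeze_zero_norm _ (hdense v)
    intro ℓ
    have hz : ⟪((Submodule.orthogonalProjection (X ℓ) v : H)), u ℓ⟫_ℂ = 0 :=
      (Submodule.mem_orthogonal _ _).mp (humem ℓ) _ (SetLike.coe_mem _)
    have : ⟪v, u ℓ⟫_ℂ = ⟪v - (Submodule.orthogonalProjection (X ℓ) v : H), u ℓ⟫_ℂ := by
      rw [inner_sub_left, hz, sub_zero]
    rw [this]
    calc ‖⟪v - (Submodule.orthogonalProjection (X ℓ) v : H), u ℓ⟫_ℂ‖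
        ≤ ‖v - (Submodule.orthogonalProjection (X ℓ) v : H)‖ * ‖u ℓ‖ := norm_inner_le_norm _ _
      _ ≤ Metric.infDist v (X ℓ : Set H) * 1 := by
          apply mul_le_mul (stmt4_norm_sub_proj_le_infDist _ _) (hu1 ℓ) (norm_nonneg _)
            Metric.infDist_nonneg
      _ = Metric.infDist v (X ℓ : Set H) := mul_one _
  have h2 : ∀ᶠ ℓ in atTop, ‖C (u ℓ)‖ ≤ γ :=
    (stmt4_compact_weak_null C hC u hu1 hweak).eventually (eventually_le_nhds hγpos)
  obtain ⟨ℓ₀, hℓ₀⟩ := (h1.and h2).exists_forall_of_atTop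
  refine ⟨ℓ₀, fun ℓ hℓ => ?_⟩
  obtain ⟨hA, hB⟩ := hℓ₀ ℓ hℓ
  haveI := hXfin ℓ
  -- pointwise smallness of `(1 - P) ∘ C`
  have hsmall : ∀ x : H, ‖C x - (Submodule.orthogonalProjection (X ℓ) (C x) : H)‖ ≤ γ * ‖x‖ := by
    intro x
    rcases eq_or_ne x 0 with rfl | hx
    · simp
    · have hpos : (0:ℝ) < ‖x‖ := norm_pos_iff.mpr hx
      set w : H := ((‖x‖ : ℂ))⁻¹ • x with hw
      have hxw : x = (‖x‖ : ℂ) • w := by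
        rw [hw, smul_smul, mul_inv_cancel₀ (by exact_mod_cast ne_of_gt hpos), one_smul]
      have hwn : ‖w‖ ≤ 1 := by
        rw [hw, norm_smul, norm_inv]
        simp [abs_of_nonneg (norm_nonneg x), inv_mul_cancel₀ (ne_of_gt hpos)]
      have h1' : ‖C w - (Submodule.orthogonalProjection (X ℓ) (C w) : H)‖ ≤ γ :=
        le_trans (stmt4_norm_sub_proj_le_infDist _ _) (hA w hwn)
      have hCx : C x = (‖x‖ : ℂ) • C w := by
        conv_lhs => rw [hxw]
        rw [map_smul]
      have hPCx : (Submodule.orthogonalProjection (X ℓ) (C x) : H)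
          = (‖x‖ : ℂ) • (Submodule.orthogonalProjection (X ℓ) (C w) : H) := by
        rw [hCx, map_smul, Submodule.coe_smul]
      calc ‖C x - (Submodule.orthogonalProjection (X ℓ) (C x) : H)‖
          = ‖(‖x‖ : ℂ) • (C w - (Submodule.orthogonalProjection (X ℓ) (C w) : H))‖ := by
            rw [hPCx, hCx, ← smul_sub]
        _ = ‖x‖ * ‖C w - (Submodule.orthogonalProjection (X ℓ) (C w) : H)‖ := by
            rw [norm_smul, Complex.norm_real, norm_norm]
        _ ≤ ‖x‖ * γ := mul_le_mul_of_nonneg_left h1' (norm_nonneg x)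
        _ = γ * ‖x‖ := mul_comm _ _
  -- lower bound for the discrete operator
  have hlow2 : ∀ x : H, (c - γ) * ‖x‖ ≤ ‖x + (Submodule.orthogonalProjection (X ℓ) (C x) : H)‖ := by
    intro x
    have key : x + (Submodule.orthogonalProjection (X ℓ) (C x) : H)
        = (x + C x) - (C x - (Submodule.orthogonalProjection (X ℓ) (C x) : H)) := by abel
    calc (c - γ) * ‖x‖ = c * ‖x‖ - γ * ‖x‖ := by ring
      _ ≤ ‖x + C x‖ - ‖C x - (Submodule.orthogonalProjection (X ℓ) (C x) : H)‖ :=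
          sub_le_sub (hlow x) (hsmall x)
      _ ≤ ‖(x + C x) - (C x - (Submodule.orthogonalProjection (X ℓ) (C x) : H))‖ :=
          norm_sub_norm_le _ _
      _ = ‖x + (Submodule.orthogonalProjection (X ℓ) (C x) : H)‖ := by rw [← key]
  -- kernel characterization
  have hker : ∀ w : H, (∀ Ψ ∈ X ℓ, ⟪Ψ, w⟫_ℂ = 0) ↔
      (Submodule.orthogonalProjection (X ℓ) w : H) = 0 := by
    intro w
    constructor
    · intro hw
      have h1' : ⟪(Submodule.orthogonalProjection (X ℓ) w : H), w⟫_ℂ = 0 :=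
        hw _ (SetLike.coe_mem _)
      have h2' : ⟪(Submodule.orthogonalProjection (X ℓ) w : H), w - (Submodule.orthogonalProjection (X ℓ) w : H)⟫_ℂ = 0 :=
        (Submodule.mem_orthogonal _ _).mp (Submodule.sub_starProjection_mem_orthogonal (K := X ℓ) w) _
          (SetLike.coe_mem _)
      have : ⟪(Submodule.orthogonalProjection (X ℓ) w : H), (Submodule.orthogonalProjection (X ℓ) w : H)⟫_ℂ = 0 := by
        rw [inner_sub_right] at h2'
        rw [← h1']
        linear_combination -h2'
      exact inner_self_eq_zero.mp this
    · intro hw Ψ hΨ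
      have h2' : ⟪Ψ, w - (Submodule.orthogonalProjection (X ℓ) w : H)⟫_ℂ = 0 :=
        (Submodule.mem_orthogonal _ _).mp (Submodule.sub_starProjection_mem_orthogonal (K := X ℓ) w) _ hΨ
      rw [inner_sub_right, hw, inner_zero_right, sub_zero] at h2'
      exact h2'
  -- Galerkin reformulation
  have hiff : ∀ Φ : H, Φ ∈ X ℓ → ((∀ Ψ ∈ X ℓ, b Φ Ψ = f Ψ) ↔
      Φ + (Submodule.orthogonalProjection (X ℓ) (C Φ) : H)
        = (Submodule.orthogonalProjection (X ℓ) (φ + C φ) : H)) := by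
    intro Φ hΦ
    have step1 : (∀ Ψ ∈ X ℓ, b Φ Ψ = f Ψ) ↔
        (∀ Ψ ∈ X ℓ, ⟪Ψ, (Φ + C Φ) - (φ + C φ)⟫_ℂ = 0) := by
      constructor
      · intro hg Ψ hΨ
        have := hg Ψ hΨ
        rw [← hφ Ψ, hb, hb] at this
        rw [inner_sub_right, inner_add_right, inner_add_right]
        linear_combination this
      · intro hg Ψ hΨ
        have := hg Ψ hΨ
        rw [inner_sub_right, inner_add_right, inner_add_right, sub_eq_zero] at this
        rw [← hφ Ψ, hb, hb]
        linear_combination this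
    rw [step1, hker]
    have hproj : (Submodule.orthogonalProjection (X ℓ) ((Φ + C Φ) - (φ + C φ)) : H)
        = (Φ + (Submodule.orthogonalProjection (X ℓ) (C Φ) : H))
          - (Submodule.orthogonalProjection (X ℓ) (φ + C φ) : H) := by
      rw [map_sub, map_add]
      push_cast
      rw [show (Submodule.orthogonalProjection (X ℓ) Φ : H) = Φ from Submodule.starProjection_eq_self_iff.mpr hΦ]
    rw [hproj, sub_eq_zero]
  -- the discrete operator on X ℓ
  set Sl : X ℓ →ₗ[ℂ] X ℓ :=
    { toFun := fun Φ => Φ + Submodule.orthogonalProjection (X ℓ) (C (Φ : H))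
      map_add' := by
        intro a b
        ext
        push_cast [map_add]
        abel
      map_smul' := by
        intro m a
        ext
        simp only [Submodule.coe_smul, map_smul, Submodule.coe_add, RingHom.id_apply]
        rw [smul_add] } with hSl
  have hSl_coe : ∀ Φ : X ℓ, ((Sl Φ : H)) = (Φ : H) + (Submodule.orthogonalProjection (X ℓ) (C (Φ : H)) : H) := by
    intro Φ; rfl
  have hSl_inj : Function.Injective Sl := by
    rw [← LinearMap.ker_eq_bot, LinearMap.ker_eq_bot']
    intro Φ hΦ
    have h0 : ((Sl Φ : H)) = 0 := by rw [hΦ]; rfl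
    rw [hSl_coe] at h0
    have := hlow2 (Φ : H)
    rw [h0, norm_zero] at this
    have hn0 : ‖(Φ : H)‖ = 0 := by nlinarith [norm_nonneg (Φ : H), hcγ]
    exact Submodule.coe_eq_zero.mp (norm_eq_zero.mp hn0)
  have hSl_surj : Function.Surjective Sl := (LinearMap.injective_iff_surjective).mp hSl_inj
  obtain ⟨Φ₀, hΦ₀⟩ := hSl_surj (Submodule.orthogonalProjection (X ℓ) (φ + C φ))
  have hΦ₀eq : (Φ₀ : H) + (Submodule.orthogonalProjection (X ℓ) (C (Φ₀ : H)) : H)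
      = (Submodule.orthogonalProjection (X ℓ) (φ + C φ) : H) := by
    rw [← hSl_coe, hΦ₀]
  constructor
  · -- existence and uniqueness
    refine ⟨(Φ₀ : H), ⟨Φ₀.2, (hiff _ Φ₀.2).mpr hΦ₀eq⟩, ?_⟩
    rintro Φ' ⟨hΦ'mem, hΦ'gal⟩
    have h1' := (hiff _ hΦ'mem).mp hΦ'gal
    have hz : (Φ' - (Φ₀ : H)) + (Submodule.orthogonalProjection (X ℓ) (C (Φ' - (Φ₀ : H))) : H) = 0 := by
      have e1 : (Submodule.orthogonalProjection (X ℓ) (C (Φ' - (Φ₀ : H))) : H)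
          = (Submodule.orthogonalProjection (X ℓ) (C Φ') : H)
            - (Submodule.orthogonalProjection (X ℓ) (C (Φ₀ : H)) : H) := by
        rw [map_sub, map_sub, Submodule.coe_sub]
      rw [e1, show (Φ' - (Φ₀ : H)) + ((Submodule.orthogonalProjection (X ℓ) (C Φ') : H)
            - (Submodule.orthogonalProjection (X ℓ) (C (Φ₀ : H)) : H))
          = (Φ' + (Submodule.orthogonalProjection (X ℓ) (C Φ') : H))
            - ((Φ₀ : H) + (Submodule.orthogonalProjection (X ℓ) (C (Φ₀ : H)) : H)) from by abel,
        h1', hΦ₀eq, sub_self]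
    have := hlow2 (Φ' - (Φ₀ : H))
    rw [hz, norm_zero] at this
    have hn0 : ‖Φ' - (Φ₀ : H)‖ = 0 := by nlinarith [norm_nonneg (Φ' - (Φ₀ : H)), hcγ]
    exact sub_eq_zero.mp (norm_eq_zero.mp hn0)
  · -- quasi-optimality
    intro Φ hΦmem hΦgal
    have hSΦ := (hiff _ hΦmem).mp hΦgal
    have key : (φ - Φ) + (Submodule.orthogonalProjection (X ℓ) (C (φ - Φ)) : H) = d ℓ := by
      have e1 : (Submodule.orthogonalProjection (X ℓ) (C (φ - Φ)) : H)
          = (Submodule.orthogonalProjection (X ℓ) (C φ) : H)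
            - (Submodule.orthogonalProjection (X ℓ) (C Φ) : H) := by
        rw [map_sub, map_sub, Submodule.coe_sub]
      have e2 : (Submodule.orthogonalProjection (X ℓ) (φ + C φ) : H)
          = (Submodule.orthogonalProjection (X ℓ) φ : H)
            + (Submodule.orthogonalProjection (X ℓ) (C φ) : H) := by
        rw [map_add, Submodule.coe_add]
      have e3 : (Submodule.orthogonalProjection (X ℓ) (C Φ) : H)
          = (Submodule.orthogonalProjection (X ℓ) φ : H)
            + (Submodule.orthogonalProjection (X ℓ) (C φ) : H) - Φ := by
        rw [← e2, ← hSΦ]; abel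
      rw [e1, e3, hd]
      abel
    set x : H := (φ - Φ) - d ℓ with hx
    have hxeq : x + (Submodule.orthogonalProjection (X ℓ) (C x) : H)
        = -(Submodule.orthogonalProjection (X ℓ) (C (d ℓ)) : H) := by
      have e1 : (Submodule.orthogonalProjection (X ℓ) (C x) : H)
          = (Submodule.orthogonalProjection (X ℓ) (C (φ - Φ)) : H)
            - (Submodule.orthogonalProjection (X ℓ) (C (d ℓ)) : H) := by
        rw [hx, map_sub, map_sub, map_sub, Submodule.coe_sub]
      rw [e1, hx, show ((φ - Φ) - d ℓ) + ((Submodule.orthogonalProjection (X ℓ) (C (φ - Φ)) : H)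
            - (Submodule.orthogonalProjection (X ℓ) (C (d ℓ)) : H))
          = (((φ - Φ) + (Submodule.orthogonalProjection (X ℓ) (C (φ - Φ)) : H)) - d ℓ)
            - (Submodule.orthogonalProjection (X ℓ) (C (d ℓ)) : H) from by abel, key]
      abel
    have hb1 : (c - γ) * ‖x‖ ≤ ‖(Submodule.orthogonalProjection (X ℓ) (C (d ℓ)) : H)‖ := by
      have := hlow2 x
      rw [hxeq, norm_neg] at this
      exact this
    have hb2 : ‖(Submodule.orthogonalProjection (X ℓ) (C (d ℓ)) : H)‖ ≤ ‖C (d ℓ)‖ := by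
      calc ‖(Submodule.orthogonalProjection (X ℓ) (C (d ℓ)) : H)‖
          ≤ ‖Submodule.orthogonalProjection (X ℓ)‖ * ‖C (d ℓ)‖ :=
            (Submodule.orthogonalProjection (X ℓ)).le_opNorm _
        _ ≤ 1 * ‖C (d ℓ)‖ :=
            mul_le_mul_of_nonneg_right (Submodule.orthogonalProjection_norm_le _) (norm_nonneg _)
        _ = ‖C (d ℓ)‖ := one_mul _
    have hb3 : ‖C (d ℓ)‖ ≤ γ * ‖d ℓ‖ := by
      have e1 : C (d ℓ) = (‖d ℓ‖ : ℂ) • C (u ℓ) := by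
        conv_lhs => rw [hdu ℓ]
        exact map_smul C _ _
      rw [e1, norm_smul, Complex.norm_real, norm_norm]
      exact le_trans (mul_le_mul_of_nonneg_left hB (norm_nonneg _))
        (le_of_eq (mul_comm _ _))
    have hdle : ‖d ℓ‖ ≤ Metric.infDist φ (X ℓ : Set H) :=
      stmt4_norm_sub_proj_le_infDist (X ℓ) φ
    have hxle : ‖x‖ ≤ ε * ‖d ℓ‖ := by
      have h4 : γ * ‖d ℓ‖ ≤ ((c - γ) * ε) * ‖d ℓ‖ := by
        apply mul_le_mul_of_nonneg_right _ (norm_nonneg _)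
        nlinarith [hγε, hγc, hε]
      have h5 : (c - γ) * ‖x‖ ≤ (c - γ) * (ε * ‖d ℓ‖) := by
        calc (c - γ) * ‖x‖ ≤ ‖(Submodule.orthogonalProjection (X ℓ) (C (d ℓ)) : H)‖ := hb1
          _ ≤ ‖C (d ℓ)‖ := hb2
          _ ≤ γ * ‖d ℓ‖ := hb3
          _ ≤ ((c - γ) * ε) * ‖d ℓ‖ := h4
          _ = (c - γ) * (ε * ‖d ℓ‖) := by ring
      exact le_of_mul_le_mul_left h5 hcγ
    calc ‖φ - Φ‖ = ‖d ℓ + x‖ := by rw [hx]; congr 1; abel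
      _ ≤ ‖d ℓ‖ + ‖x‖ := norm_add_le _ _
      _ ≤ ‖d ℓ‖ + ε * ‖d ℓ‖ := by linarith
      _ = (1 + ε) * ‖d ℓ‖ := by ring
      _ ≤ (1 + ε) * Metric.infDist φ (X ℓ : Set H) :=
          mul_le_mul_of_nonneg_left hdle (by linarith)
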